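/- Let n = 3 and m = 2^l with l > 0. If u in (Z/mZ)^3 lies in a Ducci cycle, then D^2(u) = H(u), where H(x,y,z) = (y,z,x). -/

import Mathlib

/-- The Ducci map on `(ZMod m)^3`. -/
def ducci3 (m : ℕ) : ZMod m × ZMod m × ZMod m → ZMod m × ZMod m × ZMod m :=
  fun ⟨x, y, z⟩ => (x + y, y + z, z + x)

lemma ducci3_sum (m : ℕ) (v : ZMod m × ZMod m × ZMod m) :
    (ducci3 m v).1 + (ducci3 m v).2.1 + (ducci3 m v).2.2
      = 2 * (v.1 + v.2.1 + v.2.2) := by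
  obtain ⟨x, y, z⟩ := v
  simp only [ducci3]
  ring

lemma ducci3_iter_sum (m n : ℕ) (v : ZMod m × ZMod m × ZMod m) :
    ((ducci3 m)^[n] v).1 + ((ducci3 m)^[n] v).2.1 + ((ducci3 m)^[n] v).2.2
      = 2 ^ n * (v.1 + v.2.1 + v.2.2) := by
  induction n with
  | zero => simp
  | succ n ih =>
      rw [Function.iterate_succ_apply', ducci3_sum, ih]
      ring

theorem ducci_sq_eq_shift_on_cycle (l : ℕ) (hl : 0 < l)
    (u : ZMod (2 ^ l) × ZMod (2 ^ l) × ZMod (2 ^ l))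
    (hu : ∃ t > 0, (ducci3 (2 ^ l))^[t] u = u) :
    (ducci3 (2 ^ l))^[2] u = (u.2.1, u.2.2, u.1) := by
  obtain ⟨t, ht, heq⟩ := hu
  set s : ZMod (2 ^ l) := u.1 + u.2.1 + u.2.2 with hs
  have key : (2 : ZMod (2 ^ l)) ^ t * s = s := by
    conv_rhs => rw [hs, ← heq]
    rw [ducci3_iter_sum]
  have h1 : 1 ≤ 2 ^ t := Nat.one_le_two_pow
  have hcop : Nat.Coprime (2 ^ t - 1) (2 ^ l) := by
    apply Nat.Coprime.pow_right
    have h2 : 2 ∣ 2 ^ t := dvd_pow_self 2 ht.ne'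
    have : (2 ^ t - 1) % 2 = 1 := by omega
    simpa [Nat.coprime_two_right, Nat.odd_iff] using this
  haveI : NeZero (2 ^ l) := ⟨(Nat.pow_pos (by norm_num : 0 < 2) : 0 < 2 ^ l).ne'⟩
  have hunit : IsUnit ((2 ^ t - 1 : ℕ) : ZMod (2 ^ l)) :=
    (ZMod.isUnit_iff_coprime _ _).mpr hcop
  have hcast : ((2 ^ t - 1 : ℕ) : ZMod (2 ^ l)) = (2 : ZMod (2 ^ l)) ^ t - 1 := by
    push_cast [h1]
    ring
  have hs0 : s = 0 := by
    have hz : ((2 ^ t - 1 : ℕ) : ZMod (2 ^ l)) * s = 0 := by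
      rw [hcast, sub_mul, one_mul, key, sub_self]
    exact (hunit.mul_right_eq_zero).mp hz
  obtain ⟨x, y, z⟩ := u
  have hs0' : x + y + z = 0 := hs0
  show (ducci3 (2 ^ l)) ((ducci3 (2 ^ l)) (x, y, z)) = (y, z, x)
  simp only [ducci3]
  refine Prod.ext ?_ (Prod.ext ?_ ?_) <;> simp <;> linear_combination hs0'
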